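/- Existence of ACUN normal forms: every term t is ACUN-equal either to the constant 0 or to a sum x₁⊕…⊕xₙ (n ≥ 1) of pairwise distinct terms x₁, …, xₙ, none of which has head symbol ⊕ and none of which is the constant 0. -/

import Mathlib

/-- First-order terms: variables, constants, a distinguished constant `0`,
free symbols `seq` (pairing), `senc`, `penc`, `sh` (binary), `pk` (unary),
and the binary operator `⊕` (`xor`). -/
inductive Term : Type
  | var : ℕ → Term
  | const : ℕ → Term
  | zero : Term
  | seq : Term → Term → Term
  | senc : Term → Term → Term
  | penc : Term → Term → Term
  | sh : Term → Term → Term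
  | pk : Term → Term
  | xor : Term → Term → Term
deriving DecidableEq

/-- A substitution maps variables to terms and acts homomorphically. -/
def Term.subst (σ : ℕ → Term) : Term → Term
  | var n => σ n
  | const n => const n
  | zero => zero
  | seq s t => seq (s.subst σ) (t.subst σ)
  | senc s t => senc (s.subst σ) (t.subst σ)
  | penc s t => penc (s.subst σ) (t.subst σ)
  | sh s t => sh (s.subst σ) (t.subst σ)
  | pk t => pk (t.subst σ)
  | xor s t => xor (s.subst σ) (t.subst σ)

/-- `Eqv E` is the smallest congruence relation on terms containing every
substitution instance of every equation in `E`. -/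
inductive Eqv (E : Set (Term × Term)) : Term → Term → Prop
  | ax {s t : Term} (h : (s, t) ∈ E) (σ : ℕ → Term) :
      Eqv E (s.subst σ) (t.subst σ)
  | refl (t : Term) : Eqv E t t
  | symm {s t : Term} : Eqv E s t → Eqv E t s
  | trans {s t u : Term} : Eqv E s t → Eqv E t u → Eqv E s u
  | seq_congr {s s' t t' : Term} :
      Eqv E s s' → Eqv E t t' → Eqv E (.seq s t) (.seq s' t')
  | senc_congr {s s' t t' : Term} :
      Eqv E s s' → Eqv E t t' → Eqv E (.senc s t) (.senc s' t')
  | penc_congr {s s' t t' : Term} :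
      Eqv E s s' → Eqv E t t' → Eqv E (.penc s t) (.penc s' t')
  | sh_congr {s s' t t' : Term} :
      Eqv E s s' → Eqv E t t' → Eqv E (.sh s t) (.sh s' t')
  | pk_congr {t t' : Term} : Eqv E t t' → Eqv E (.pk t) (.pk t')
  | xor_congr {s s' t t' : Term} :
      Eqv E s s' → Eqv E t t' → Eqv E (.xor s t) (.xor s' t')

/-- `m` and `t` are `E`-unifiable if some substitution makes them `E`-equal. -/
def Unifiable (E : Set (Term × Term)) (m t : Term) : Prop :=
  ∃ σ : ℕ → Term, Eqv E (m.subst σ) (t.subst σ)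

/-- The theory `Std`: trivial equations for the free function symbols. -/
def Std : Set (Term × Term) :=
  { (.seq (.var 0) (.var 1), .seq (.var 0) (.var 1)),
    (.senc (.var 0) (.var 1), .senc (.var 0) (.var 1)),
    (.penc (.var 0) (.var 1), .penc (.var 0) (.var 1)),
    (.sh (.var 0) (.var 1), .sh (.var 0) (.var 1)),
    (.pk (.var 0), .pk (.var 0)) }

/-- The theory `Free⊕`: the trivial equation `x ⊕ y = x ⊕ y`. -/
def FreeXor : Set (Term × Term) :=
  { (.xor (.var 0) (.var 1), .xor (.var 0) (.var 1)) }

/-- The theory `ACUN`: associativity, commutativity, unit `0`, nilpotence. -/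
def ACUN : Set (Term × Term) :=
  { (.xor (.xor (.var 0) (.var 1)) (.var 2), .xor (.var 0) (.xor (.var 1) (.var 2))),
    (.xor (.var 0) (.var 1), .xor (.var 1) (.var 0)),
    (.xor (.var 0) .zero, .var 0),
    (.xor (.var 0) (.var 0), .zero) }

/-- A term is `⊕`-headed if its head symbol is `⊕`. -/
def Term.isXorHead : Term → Prop
  | .xor _ _ => True
  | _ => False

/-- `xorSum x [x₂, …, xₙ]` is the (left-parenthesized) sum `x ⊕ x₂ ⊕ … ⊕ xₙ`. -/
def xorSum (x : Term) (l : List Term) : Term :=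
  l.foldl Term.xor x

section Aux

abbrev R := Eqv ACUN

private def sub2 (a b : Term) : ℕ → Term := fun n => if n = 0 then a else b
private def sub3 (a b c : Term) : ℕ → Term :=
  fun n => if n = 0 then a else if n = 1 then b else c

lemma xcomm (a b : Term) : R (a.xor b) (b.xor a) := by
  have h := Eqv.ax (E := ACUN) (s := .xor (.var 0) (.var 1)) (t := .xor (.var 1) (.var 0))
    (by simp [ACUN]) (sub2 a b)
  simpa [Term.subst, sub2] using h

lemma xassoc (a b c : Term) : R ((a.xor b).xor c) (a.xor (b.xor c)) := by
  have h := Eqv.ax (E := ACUN)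
    (s := .xor (.xor (.var 0) (.var 1)) (.var 2))
    (t := .xor (.var 0) (.xor (.var 1) (.var 2)))
    (by simp [ACUN]) (sub3 a b c)
  simpa [Term.subst, sub3] using h

lemma xzero (a : Term) : R (a.xor .zero) a := by
  have h := Eqv.ax (E := ACUN) (s := .xor (.var 0) .zero) (t := .var 0)
    (by simp [ACUN]) (fun _ => a)
  simpa [Term.subst] using h

lemma xnil (a : Term) : R (a.xor a) .zero := by
  have h := Eqv.ax (E := ACUN) (s := .xor (.var 0) (.var 0)) (t := .zero)
    (by simp [ACUN]) (fun _ => a)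
  simpa [Term.subst] using h

/-- Right-fold sum of a list of terms. -/
def S (l : List Term) : Term := l.foldr Term.xor .zero

lemma S_nil : S [] = Term.zero := rfl
lemma S_cons (a : Term) (l : List Term) : S (a :: l) = a.xor (S l) := rfl

lemma S_append (l1 l2 : List Term) : R (S (l1 ++ l2)) ((S l1).xor (S l2)) := by
  induction l1 with
  | nil =>
      simp only [List.nil_append, S_nil]
      exact ((xcomm .zero (S l2)).trans (xzero (S l2))).symm
  | cons a l1 ih =>
      simp only [List.cons_append, S_cons]
      exact (Eqv.xor_congr (Eqv.refl a) ih).trans (xassoc a (S l1) (S l2)).symm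

lemma S_perm {l1 l2 : List Term} (h : l1.Perm l2) : R (S l1) (S l2) := by
  induction h with
  | nil => exact Eqv.refl _
  | cons a _ ih => exact Eqv.xor_congr (Eqv.refl a) ih
  | swap a b l =>
      exact ((xassoc b a (S l)).symm.trans
        (Eqv.xor_congr (xcomm b a) (Eqv.refl (S l)))).trans (xassoc a b (S l))
  | trans _ _ ih1 ih2 => exact ih1.trans ih2

lemma S_cancel (a : Term) (l : List Term) : R (S (a :: a :: l)) (S l) := by
  have h1 : R (S (a :: a :: l)) ((a.xor a).xor (S l)) := (xassoc a a (S l)).symm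
  have h2 : R ((a.xor a).xor (S l)) (Term.zero.xor (S l)) :=
    Eqv.xor_congr (xnil a) (Eqv.refl _)
  have h3 : R (Term.zero.xor (S l)) (S l) := (xcomm _ _).trans (xzero _)
  exact (h1.trans h2).trans h3

/-- Deduplication: any sum equals a sum over a nodup sublist (up to membership). -/
lemma dedup_sum (m : List Term) :
    ∃ l : List Term, l.Nodup ∧ (∀ u ∈ l, u ∈ m) ∧ R (S m) (S l) := by
  by_cases hnd : m.Nodup
  · exact ⟨m, hnd, fun u hu => hu, Eqv.refl _⟩
  · obtain ⟨a, ha⟩ := List.exists_duplicate_iff_not_nodup.2 hnd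
    have ham : a ∈ m := ha.mem
    have hcount : 2 ≤ m.count a := List.duplicate_iff_two_le_count.1 ha
    have ham' : a ∈ m.erase a := by
      have hce := @List.count_erase_self _ _ _ a m
      have : 0 < (m.erase a).count a := by omega
      exact List.count_pos_iff.1 this
    have hp : m.Perm (a :: a :: (m.erase a).erase a) :=
      (List.perm_cons_erase ham).trans ((List.perm_cons_erase ham').cons a)
    have hlen : ((m.erase a).erase a).length < m.length := by
      have h1 := List.length_erase_of_mem ham
      have h2 := List.length_erase_of_mem ham'
      have : 0 < m.length := List.length_pos_of_mem ham
      omega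
    obtain ⟨l, hl1, hl2, hl3⟩ := dedup_sum ((m.erase a).erase a)
    refine ⟨l, hl1, fun u hu => ?_, ?_⟩
    · exact (List.erase_subset ((List.erase_subset (hl2 u hu)))) 
    · exact ((S_perm hp).trans (S_cancel a _)).trans hl3
termination_by m.length

lemma S_foldl (xs : List Term) (x : Term) : R (x.xor (S xs)) (xorSum x xs) := by
  induction xs generalizing x with
  | nil => simpa [xorSum, S_nil] using xzero x
  | cons a xs ih =>
      have h1 : R (x.xor (S (a :: xs))) ((x.xor a).xor (S xs)) := (xassoc _ _ _).symm
      have h2 := ih (x.xor a)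
      simpa [xorSum] using h1.trans h2

def Good (u : Term) : Prop := ¬ u.isXorHead ∧ u ≠ Term.zero

lemma single_good {g : Term} (h : Good g) :
    ∃ l : List Term, l.Nodup ∧ (∀ u ∈ l, Good u) ∧ R g (S l) := by
  refine ⟨[g], by simp, ?_, (xzero g).symm⟩
  intro u hu
  simp only [List.mem_singleton] at hu
  subst hu; exact h

lemma normal_form_list (t : Term) :
    ∃ l : List Term, l.Nodup ∧ (∀ u ∈ l, Good u) ∧ R t (S l) := by
  induction t with
  | var n => exact single_good ⟨by simp [Term.isXorHead], by simp⟩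
  | const n => exact single_good ⟨by simp [Term.isXorHead], by simp⟩
  | zero => exact ⟨[], by simp, by simp, Eqv.refl _⟩
  | seq s t _ _ => exact single_good ⟨by simp [Term.isXorHead], by simp⟩
  | senc s t _ _ => exact single_good ⟨by simp [Term.isXorHead], by simp⟩
  | penc s t _ _ => exact single_good ⟨by simp [Term.isXorHead], by simp⟩
  | sh s t _ _ => exact single_good ⟨by simp [Term.isXorHead], by simp⟩
  | pk s _ => exact single_good ⟨by simp [Term.isXorHead], by simp⟩
  | xor s t ihs iht =>
      obtain ⟨l1, h1n, h1g, h1e⟩ := ihs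
      obtain ⟨l2, h2n, h2g, h2e⟩ := iht
      obtain ⟨l, hln, hls, hle⟩ := dedup_sum (l1 ++ l2)
      refine ⟨l, hln, fun u hu => ?_, ?_⟩
      · rcases List.mem_append.1 (hls u hu) with h | h
        · exact h1g u h
        · exact h2g u h
      · exact ((Eqv.xor_congr h1e h2e).trans (S_append l1 l2).symm).trans hle

end Aux

/-- Existence of ACUN normal forms: every term is ACUN-equal to `0` or to a
sum of pairwise distinct, non-`⊕`-headed, nonzero terms. -/
theorem acun_normal_form_exists (t : Term) :
    Eqv ACUN t Term.zero ∨
      ∃ (x : Term) (xs : List Term),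
        (∀ u ∈ x :: xs, ¬ u.isXorHead ∧ u ≠ Term.zero) ∧
        (x :: xs).Pairwise (· ≠ ·) ∧
        Eqv ACUN t (xorSum x xs) := by
  obtain ⟨l, hln, hlg, hle⟩ := normal_form_list t
  match l, hln, hlg, hle with
  | [], _, _, hle => exact Or.inl hle
  | x :: xs, hln, hlg, hle =>
      exact Or.inr ⟨x, xs, hlg, hln, hle.trans (S_foldl xs x)⟩
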